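/- Consider the budgeted variant of the robust flow LP: maximize Σ_P c̄'_P x_P − B' subject to Σ_{P ∋ e} x_P ≤ u_e for all e, Σ_P γ_P x_P ≤ B_F with γ_P := Σ_{e ∈ P} γ_e, and x ≥ 0. Its dual separation problem asks, given arc weights y : A → ℝ≥0 and a scalar μ ≥ 0 (multiplier of the budget constraint), whether some path P violates Σ_{e ∈ P} (y_e + μ γ_e) ≥ c̄'_P; this reduces, exactly as in the unbudgeted case, to |Γ| shortest-path computations with modified weights (y_e + μγ_e restricted to arcs with c'_e ≥ γ, and +∞ otherwise): a violated constraint exists iff π(γ) < γ for some γ ∈ Γ := {c'_e : e ∈ A}. -/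

import Mathlib

/-- Dual separation for the budgeted robust flow LP.  Dual
variables are arc weights `y ≥ 0` and a budget multiplier `μ ≥ 0`; the dual
constraint of path `P` is `∑_{e∈P} (y_e + μ γ_e) ≥ min_{e∈P} c'_e`.  With the
modified weights `w^γ₀_e = y_e + μ γ_e` if `c'_e ≥ γ₀` and `+∞` otherwise, and
`π(γ₀)` the minimum modified length over the path family, a violated dual
constraint exists iff `π(γ₀) < γ₀` for some `γ₀ ∈ Γ = {c'_e : e ∈ A}`. -/
theorem budgeted_dual_separation {α : Type*} [Fintype α] [DecidableEq α]
    (Paths : Finset (Finset α)) (hne : Paths.Nonempty)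
    (hnonempty : ∀ P ∈ Paths, P.Nonempty)
    (y γ c' : α → ℝ) (hy : ∀ e, 0 ≤ y e) (hγ : ∀ e, 0 ≤ γ e)
    (hc' : ∀ e, 0 ≤ c' e) (μ : ℝ) (hμ : 0 ≤ μ) :
    (∃ P ∈ Paths, ∀ f ∈ P, ∑ e ∈ P, (y e + μ * γ e) < c' f) ↔
    (∃ a : α, Paths.inf' hne
        (fun P => ∑ e ∈ P,
          (if c' a ≤ c' e then ENNReal.ofReal (y e + μ * γ e)
           else (⊤ : ENNReal)))
      < ENNReal.ofReal (c' a)) := by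
  have key : ∀ (a : α) (P : Finset α), (∀ e ∈ P, c' a ≤ c' e) →
      ∑ e ∈ P, (if c' a ≤ c' e then ENNReal.ofReal (y e + μ * γ e)
        else (⊤ : ENNReal)) = ENNReal.ofReal (∑ e ∈ P, (y e + μ * γ e)) := by
    intro a P hmin
    rw [ENNReal.ofReal_sum_of_nonneg (fun e _ => add_nonneg (hy e) (mul_nonneg hμ (hγ e)))]
    exact Finset.sum_congr rfl fun e he => by rw [if_pos (hmin e he)]
  constructor
  · rintro ⟨P, hP, hlt⟩
    obtain ⟨a, ha, hamin⟩ := Finset.exists_min_image P c' (hnonempty P hP)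
    refine ⟨a, lt_of_le_of_lt (Finset.inf'_le _ hP) ?_⟩
    rw [key a P hamin]
    exact (ENNReal.ofReal_lt_ofReal_iff_of_nonneg
      (Finset.sum_nonneg fun e _ => add_nonneg (hy e) (mul_nonneg hμ (hγ e)))).2 (hlt a ha)
  · rintro ⟨a, ha⟩
    obtain ⟨P, hP, hPeq⟩ := Finset.exists_mem_eq_inf' hne
      (fun P => ∑ e ∈ P, (if c' a ≤ c' e then ENNReal.ofReal (y e + μ * γ e)
        else (⊤ : ENNReal)))
    rw [hPeq] at ha
    have hmin : ∀ e ∈ P, c' a ≤ c' e := by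
      intro e he
      by_contra h
      have htop : (⊤ : ENNReal) ≤ ∑ f ∈ P,
          (if c' a ≤ c' f then ENNReal.ofReal (y f + μ * γ f)
            else (⊤ : ENNReal)) := by
        calc (⊤ : ENNReal) = if c' a ≤ c' e then ENNReal.ofReal (y e + μ * γ e)
              else (⊤ : ENNReal) := by rw [if_neg h]
          _ ≤ _ := Finset.single_le_sum (f := fun f => if c' a ≤ c' f
              then ENNReal.ofReal (y f + μ * γ f) else (⊤ : ENNReal))
              (fun i _ => zero_le) he
      exact absurd (lt_of_lt_of_le ha le_top) (by simp [top_le_iff.1 htop])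
    rw [key a P hmin] at ha
    have hsum : ∑ e ∈ P, (y e + μ * γ e) < c' a :=
      (ENNReal.ofReal_lt_ofReal_iff_of_nonneg
        (Finset.sum_nonneg fun e _ => add_nonneg (hy e) (mul_nonneg hμ (hγ e)))).1 ha
    exact ⟨P, hP, fun f hf => lt_of_lt_of_le hsum (hmin f hf)⟩
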